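/- The matrix equation AX - YB = C over a field has a solution (X, Y) if and only if the block matrices [[A, C], [0, B]] and [[A, 0], [0, B]] are equivalent, i.e., have equal rank. -/

import Mathlib

open Matrix Module Submodule LinearMap

section RothAux

variable {F : Type*} [Field F] {m n p q : ℕ}

/-- Dimension splitting of a finite-dimensional submodule along a linear map. -/
private lemma finrank_submodule_split {V W : Type*} [AddCommGroup V] [Module F V]
    [AddCommGroup W] [Module F W] [FiniteDimensional F V]
    (S : Submodule F V) (π : V →ₗ[F] W) :
    finrank F S = finrank F (S.map π) + finrank F ↥(S ⊓ ker π) := by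
  have h := LinearMap.finrank_range_add_finrank_ker (π.domRestrict S)
  rw [LinearMap.range_domRestrict, LinearMap.ker_domRestrict] at h
  have hc : (ker π).comap S.subtype = (S ⊓ ker π).comap S.subtype := by
    ext x; simp [x.2]
  rw [hc, (Submodule.comapSubtypeEquivOfLe (inf_le_left : S ⊓ ker π ≤ S)).finrank_eq] at h
  omega

/-- Factorization through a linear map whose kernel is contained in the kernel of another. -/
private lemma exists_comp_factor {V W Z : Type*} [AddCommGroup V] [Module F V]
    [AddCommGroup W] [Module F W] [AddCommGroup Z] [Module F Z]
    (f : V →ₗ[F] W) (h : V →ₗ[F] Z) (hker : ker f ≤ ker h) :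
    ∃ g : W →ₗ[F] Z, h = g ∘ₗ f := by
  obtain ⟨g, hg⟩ := LinearMap.exists_extend
    (((ker f).liftQ h hker) ∘ₗ (f.quotKerEquivRange).symm.toLinearMap)
  refine ⟨g, ?_⟩
  ext v
  have h2 : (f.quotKerEquivRange).symm ⟨f v, LinearMap.mem_range_self f v⟩ =
      Submodule.Quotient.mk v := by
    rw [LinearEquiv.symm_apply_eq]
    exact (Subtype.ext (f.quotKerEquivRange_apply_mk v)).symm
  have h3 := LinearMap.congr_fun hg ⟨f v, LinearMap.mem_range_self f v⟩
  simp only [LinearMap.coe_comp, Function.comp_apply, Submodule.coe_subtype,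
    LinearEquiv.coe_toLinearMap] at h3
  rw [h2, Submodule.liftQ_apply] at h3
  simpa using h3.symm

/-- The product-space linear map corresponding to `fromBlocks A C 0 B`. -/
private noncomputable def blockMap (A : Matrix (Fin m) (Fin p) F) (B : Matrix (Fin q) (Fin n) F)
    (C : Matrix (Fin m) (Fin n) F) :
    ((Fin p → F) × (Fin n → F)) →ₗ[F] ((Fin m → F) × (Fin q → F)) :=
  LinearMap.prod
    (A.mulVecLin ∘ₗ LinearMap.fst F _ _ + C.mulVecLin ∘ₗ LinearMap.snd F _ _)
    (B.mulVecLin ∘ₗ LinearMap.snd F _ _)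

private lemma blockMap_apply (A : Matrix (Fin m) (Fin p) F) (B : Matrix (Fin q) (Fin n) F)
    (C : Matrix (Fin m) (Fin n) F) (x : Fin p → F) (y : Fin n → F) :
    blockMap A B C (x, y) = (A.mulVec x + C.mulVec y, B.mulVec y) := rfl

private lemma rank_fromBlocks_eq_finrank (A : Matrix (Fin m) (Fin p) F)
    (B : Matrix (Fin q) (Fin n) F) (C : Matrix (Fin m) (Fin n) F) :
    (fromBlocks A C 0 B).rank = finrank F (LinearMap.range (blockMap A B C)) := by
  set e₁ := LinearEquiv.sumArrowLequivProdArrow (Fin m) (Fin q) F F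
  set e₂ := LinearEquiv.sumArrowLequivProdArrow (Fin p) (Fin n) F F
  have hM : (fromBlocks A C 0 B).mulVecLin =
      (e₁.symm.toLinearMap) ∘ₗ ((blockMap A B C) ∘ₗ e₂.toLinearMap) := by
    apply LinearMap.ext; intro w; funext s
    cases s <;>
      simp [blockMap, e₁, e₂, Matrix.mulVecLin, Matrix.mulVec, dotProduct,
        Fintype.sum_sum_type, fromBlocks, LinearEquiv.sumArrowLequivProdArrow]
  rw [Matrix.rank, hM, LinearMap.range_comp, LinearEquiv.finrank_map_eq,
    LinearMap.range_comp_of_range_eq_top _ (LinearEquiv.range e₂)]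

end RothAux

set_option maxHeartbeats 1000000 in
theorem roth_equivalence {F : Type*} [Field F] {m n p q : ℕ}
    (A : Matrix (Fin m) (Fin p) F) (B : Matrix (Fin q) (Fin n) F)
    (C : Matrix (Fin m) (Fin n) F) :
    (∃ (X : Matrix (Fin p) (Fin n) F) (Y : Matrix (Fin m) (Fin q) F),
      A * X - Y * B = C) ↔
    (fromBlocks A C 0 B).rank = (fromBlocks A 0 0 B).rank := by
  classical
  constructor
  · rintro ⟨X, Y, h⟩
    have h1 : fromBlocks (1 : Matrix (Fin m) (Fin m) F) (-Y) 0 (1 : Matrix (Fin q) (Fin q) F) *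
        fromBlocks A 0 0 B * fromBlocks (1 : Matrix (Fin p) (Fin p) F) X 0 1
        = fromBlocks A C 0 B := by
      erw [Matrix.fromBlocks_multiply, Matrix.fromBlocks_multiply]
      simp [← h, Matrix.neg_mul, sub_eq_add_neg]
    have hdet1 : IsUnit (fromBlocks (1 : Matrix (Fin m) (Fin m) F) (-Y) 0
        (1 : Matrix (Fin q) (Fin q) F)).det := by
      rw [Matrix.det_fromBlocks_zero₂₁]; simp
    have hdet2 : IsUnit (fromBlocks (1 : Matrix (Fin p) (Fin p) F) X 0
        (1 : Matrix (Fin n) (Fin n) F)).det := by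
      rw [Matrix.det_fromBlocks_zero₂₁]; simp
    rw [← h1]
    erw [Matrix.rank_mul_eq_left_of_isUnit_det _ _ hdet2,
      Matrix.rank_mul_eq_right_of_isUnit_det _ _ hdet1]
  · intro hrk
    have hM := rank_fromBlocks_eq_finrank A B C
    have hN := rank_fromBlocks_eq_finrank A B 0
    set fA := A.mulVecLin with hfA
    set fB := B.mulVecLin with hfB
    set fC := C.mulVecLin with hfC
    set g := blockMap A B C with hg
    set g0 := blockMap A B 0 with hg0
    set π := LinearMap.snd F (Fin m → F) (Fin q → F) with hπ
    have hmap : ∀ D : Matrix (Fin m) (Fin n) F,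
        (LinearMap.range (blockMap A B D)).map π = LinearMap.range fB := by
      intro D
      apply le_antisymm
      · rintro _ ⟨w, ⟨⟨x, y⟩, rfl⟩, rfl⟩
        exact ⟨y, rfl⟩
      · rintro _ ⟨y, rfl⟩
        exact ⟨blockMap A B D (0, y), ⟨(0, y), rfl⟩, rfl⟩
    have hN0 : LinearMap.range g0 ⊓ ker π = (LinearMap.range fA).prod ⊥ := by
      apply le_antisymm
      · rintro ⟨u, v⟩ ⟨⟨⟨x, y⟩, hxy⟩, hker⟩
        have hv : v = 0 := hker
        rw [hg0, blockMap_apply] at hxy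
        have hu : A.mulVec x = u := by
          have := congrArg Prod.fst hxy
          simpa using this
        exact ⟨⟨x, hu⟩, by simp [hv]⟩
      · rintro ⟨u, v⟩ ⟨⟨x, hx⟩, hv⟩
        have hv : v = 0 := hv
        refine ⟨⟨(x, 0), ?_⟩, by simp [π, hv]⟩
        rw [hg0, blockMap_apply]
        simp only [Matrix.mulVec_zero, Matrix.zero_mulVec, add_zero, Prod.mk.injEq]
        exact ⟨hx, hv.symm⟩
    have hM0 : (LinearMap.range fA).prod ⊥ ≤ LinearMap.range g ⊓ ker π := by
      rintro ⟨u, v⟩ ⟨⟨x, hx⟩, hv⟩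
      have hv : v = 0 := hv
      refine ⟨⟨(x, 0), ?_⟩, by simp [π, hv]⟩
      rw [hg, blockMap_apply]
      simp only [Matrix.mulVec_zero, add_zero, Prod.mk.injEq]
      exact ⟨hx, hv.symm⟩
    have hdim : finrank F ↥(LinearMap.range g ⊓ ker π) =
        finrank F ↥((LinearMap.range fA).prod (⊥ : Submodule F (Fin q → F))) := by
      have e1 := finrank_submodule_split (LinearMap.range g) π
      have e2 := finrank_submodule_split (LinearMap.range g0) π
      rw [hmap C] at e1
      rw [hmap 0, hN0] at e2
      rw [hM, hN] at hrk
      omega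
    have hEq : (LinearMap.range fA).prod ⊥ = LinearMap.range g ⊓ ker π :=
      Submodule.eq_of_le_of_finrank_le hM0 hdim.le
    have key : ∀ v, B.mulVec v = 0 → C.mulVec v ∈ LinearMap.range fA := by
      intro v hv
      have hmem : (C.mulVec v, (0 : Fin q → F)) ∈ LinearMap.range g ⊓ ker π := by
        refine ⟨⟨(0, v), ?_⟩, rfl⟩
        rw [hg, blockMap_apply]
        simp [hv]
      rw [← hEq] at hmem
      exact hmem.1
    have hker : ker fB ≤ ker ((LinearMap.range fA).mkQ ∘ₗ fC) := by
      intro v hv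
      simp only [mem_ker, LinearMap.comp_apply, Submodule.mkQ_apply,
        Submodule.Quotient.mk_eq_zero]
      exact key v hv
    obtain ⟨g', hg'⟩ := exists_comp_factor fB ((LinearMap.range fA).mkQ ∘ₗ fC) hker
    obtain ⟨Y', hY'⟩ := Module.projective_lifting_property (LinearMap.range fA).mkQ g'
      (LinearMap.range fA).mkQ_surjective
    set Y := LinearMap.toMatrix' Y' with hY
    have hYv : ∀ w, Y.mulVec w = Y' w := by
      intro w
      rw [hY, ← Matrix.toLin'_apply, Matrix.toLin'_toMatrix']
    have hcol : ∀ v, C.mulVec v - Y.mulVec (B.mulVec v) ∈ LinearMap.range fA := by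
      intro v
      rw [← Submodule.Quotient.mk_eq_zero, ← Submodule.mkQ_apply, map_sub]
      have e1 : (LinearMap.range fA).mkQ (C.mulVec v) = g' (fB v) := by
        have := LinearMap.congr_fun hg' v
        simpa [Matrix.mulVecLin_apply, hfC] using this
      have e2 : (LinearMap.range fA).mkQ (Y.mulVec (B.mulVec v)) = g' (fB v) := by
        rw [hYv]
        have := LinearMap.congr_fun hY' (B.mulVec v)
        simpa [Matrix.mulVecLin_apply, hfB] using this
      rw [e1, e2, sub_self]
    have hX : ∀ j, ∃ u : Fin p → F,
        A.mulVec u = C.mulVec (Pi.single j 1) - Y.mulVec (B.mulVec (Pi.single j 1)) := by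
      intro j
      obtain ⟨u, hu⟩ := hcol (Pi.single j 1)
      exact ⟨u, hu⟩
    choose u hu using hX
    refine ⟨Matrix.of (fun i j => u j i), -Y, ?_⟩
    ext i j
    have h1 := congrFun (hu j) i
    have h2 : (A * Matrix.of (fun i j => u j i)) i j = (A.mulVec (u j)) i := by
      simp [Matrix.mul_apply, Matrix.mulVec, dotProduct]
    have h3 : (Y * B) i j = (Y.mulVec (B.mulVec (Pi.single j 1))) i := by
      rw [Matrix.mulVec_mulVec]
      simp [Matrix.mulVec_single]
    have h4 : (C.mulVec (Pi.single j 1)) i = C i j := by simp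
    simp only [Matrix.sub_apply, Matrix.neg_mul, Matrix.neg_apply, sub_neg_eq_add]
    rw [h2, h1, Pi.sub_apply, h4, ← h3]
    ring
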